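/- The set U₁' = {x ∈ A | x x* = −(z − z⁻¹)²} is equal to (z − z⁻¹)·U₁, i.e., it consists precisely of the elements (z − z⁻¹) u with u ∈ U₁. -/

import Mathlib

open LaurentPolynomial

/-- `A = ℤ[z, z⁻¹]`, the Laurent polynomial ring over the integers. -/
abbrev A : Type := LaurentPolynomial ℤ

/-- The conjugation `f(z) ↦ f(z⁻¹)` on `A`. -/
noncomputable def conj : A →+* A := (LaurentPolynomial.invert (R := ℤ)).toRingEquiv.toRingHom

/-- The fixed subring `A₀ = {f ∈ A | f* = f}`. -/
noncomputable def A0 : Subring A := RingHom.eqLocus conj (RingHom.id A)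

/-- `E = A⁴`. -/
abbrev E : Type := Fin 4 → A

/-- The norm `N(x) = ∑ₖ xₖ xₖ*`. -/
noncomputable def N (x : E) : A := ∑ k, x k * conj (x k)

/-- The standard `A`-basis vectors of `E = A⁴`. -/
noncomputable def e (k : Fin 4) : E := Pi.single k 1

/-- Yang's multiplication `x ∘ y = (p, q, r, s)`. -/
noncomputable def yang (x y : E) : E :=
  ![x 0 * y 0 - x 1 * conj (y 1) - x 2 * conj (y 2) - x 3 * conj (y 3),
    x 0 * y 1 + x 1 * conj (y 0) + conj (x 2) * conj (y 3) - conj (x 3) * conj (y 2),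
    x 0 * y 2 - conj (x 1) * conj (y 3) + x 2 * conj (y 0) + conj (x 3) * conj (y 1),
    x 0 * y 3 + conj (x 1) * conj (y 2) - conj (x 2) * conj (y 1) + x 3 * conj (y 0)]


open Polynomial in
private noncomputable def ev (c : ℤˣ) : LaurentPolynomial ℤ →ₐ[ℤ] ℤ :=
  AddMonoidAlgebra.lift ℤ ℤ ℤ ((Units.coeHom ℤ).comp (zpowersHom ℤˣ c))

private theorem ev_T (c : ℤˣ) (n : ℤ) : ev c (T n) = ((c ^ n : ℤˣ) : ℤ) := by
  rw [ev, T, AddMonoidAlgebra.lift_single]; simp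

private theorem int_units_inv (c : ℤˣ) : c⁻¹ = c :=
  (eq_inv_of_mul_eq_one_left (Int.units_mul_self c)).symm

private theorem ev_conj (c : ℤˣ) (f : A) : ev c (conj f) = ev c f := by
  induction f using LaurentPolynomial.induction_on' with
  | add p q hp hq => simp [map_add, hp, hq]
  | C_mul_T n a =>
      rw [show conj (LaurentPolynomial.C a * T n) = invert (LaurentPolynomial.C a * T n) from rfl]
      simp only [map_mul, invert_T, invert_C, ev_T]
      rw [zpow_neg, int_units_inv]

private theorem ev_C (c : ℤˣ) (a : ℤ) : ev c (LaurentPolynomial.C a) = a := by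
  rw [LaurentPolynomial.C]
  show ev c (AddMonoidAlgebra.single 0 a) = a
  rw [ev, AddMonoidAlgebra.lift_single]; simp

open Polynomial in
private theorem ev_toLaurent (c : ℤˣ) (p : ℤ[X]) :
    ev c (Polynomial.toLaurent p) = p.eval (c : ℤ) := by
  have h : ((ev c).toRingHom.comp Polynomial.toLaurent) = Polynomial.evalRingHom (c : ℤ) := by
    apply Polynomial.ringHom_ext
    · intro a
      simp only [RingHom.comp_apply, Polynomial.toLaurent_C, coe_evalRingHom, eval_C]
      exact ev_C c a
    · simp only [RingHom.comp_apply, Polynomial.toLaurent_X, coe_evalRingHom, eval_X]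
      rw [show (ev c).toRingHom (T 1) = ev c (T 1) from rfl, ev_T]; simp
  have := congrArg (fun g => g p) h
  simpa using this

open Polynomial in
private theorem dT1 : ((T 1 - T (-1)) : A) * T 1 = Polynomial.toLaurent (X ^ 2 - 1 : ℤ[X]) := by
  rw [sub_mul, ← T_add, ← T_add]
  norm_num [map_sub, Polynomial.toLaurent_X_pow, T_zero]

open Polynomial in
private theorem dne : (T 1 - T (-1) : A) ≠ 0 := by
  intro h
  have h2 : Polynomial.toLaurent (X ^ 2 - 1 : ℤ[X]) = Polynomial.toLaurent (0 : ℤ[X]) := by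
    rw [← dT1, h, zero_mul, map_zero]
  have h3 := Polynomial.toLaurent_injective h2
  have := congrArg (Polynomial.eval (0 : ℤ)) h3
  simp at this

private theorem conj_d : conj (T 1 - T (-1) : A) = -(T 1 - T (-1)) := by
  show invert (T 1 - T (-1) : A) = -(T 1 - T (-1))
  rw [map_sub, invert_T, invert_T]; ring_nf

/-- `U₁' = {x ∈ A | x x* = −(z − z⁻¹)²}` equals `(z − z⁻¹) U₁`. -/
theorem U1'_eq :
    {x : A | x * conj x = -(T 1 - T (-1)) ^ 2} =
      (fun u : A => (T 1 - T (-1)) * u) '' {u : A | u * conj u = 1} := by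
  ext x
  simp only [Set.mem_setOf_eq, Set.mem_image]
  constructor
  · intro hx
    have hev : ∀ c : ℤˣ, ev c x = 0 := by
      intro c
      have h1 := congrArg (ev c) hx
      rw [map_mul, ev_conj, map_neg, map_pow, map_sub, ev_T, ev_T] at h1
      have hc : ((c ^ (1 : ℤ) : ℤˣ) : ℤ) - ((c ^ (-1 : ℤ) : ℤˣ) : ℤ) = 0 := by
        rw [zpow_neg, int_units_inv]; ring
      rw [hc] at h1
      have h2 : ev c x * ev c x = 0 := by rw [h1]; ring
      exact mul_self_eq_zero.mp h2
    obtain ⟨n, p, hp⟩ := x.exists_T_pow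
    have hroot1 : p.IsRoot 1 := by
      have h := ev_toLaurent 1 p
      rw [hp, map_mul, hev, zero_mul] at h
      simpa [Polynomial.IsRoot] using h.symm
    have hrootm1 : p.IsRoot (-1) := by
      have h := ev_toLaurent (-1) p
      rw [hp, map_mul, hev, zero_mul] at h
      simpa [Polynomial.IsRoot] using h.symm
    obtain ⟨a, ha⟩ := Polynomial.dvd_iff_isRoot.mpr hroot1
    have hdvd2 : (Polynomial.X - Polynomial.C (-1 : ℤ)) ∣ a := by
      have hprime := Polynomial.prime_X_sub_C (-1 : ℤ)
      have hdvd : (Polynomial.X - Polynomial.C (-1 : ℤ)) ∣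
          (Polynomial.X - Polynomial.C 1) * a :=
        ha ▸ Polynomial.dvd_iff_isRoot.mpr hrootm1
      rcases hprime.2.2 _ _ hdvd with h | h
      · exfalso
        obtain ⟨g, hg⟩ := h
        have h' := congrArg (Polynomial.eval (-1 : ℤ)) hg
        simp at h'
      · exact h
    obtain ⟨b, hb⟩ := hdvd2
    have hpfac : p = (Polynomial.X ^ 2 - 1) * b := by
      rw [ha, hb]; simp only [map_one, map_neg]; ring
    have hxeq : x = (T 1 - T (-1)) * (T 1 * Polynomial.toLaurent b * T (-n)) := by
      have hx' : x = Polynomial.toLaurent p * T (-n) := by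
        have : x * T n * T (-n) = x := by
          rw [mul_assoc, ← T_add]
          simp [T_zero]
        rw [← this, ← hp]
      rw [hx', hpfac, map_mul, ← dT1]
      ring
    refine ⟨T 1 * Polynomial.toLaurent b * T (-n), ?_, hxeq.symm⟩
    set u : A := T 1 * Polynomial.toLaurent b * T (-n) with hu
    have hconjx : conj x = -(T 1 - T (-1)) * conj u := by
      rw [hxeq, map_mul, conj_d]
    have hstep : -(T 1 - T (-1) : A) ^ 2 * (u * conj u) = x * conj x := by
      rw [hconjx, hxeq]; ring
    have hkey : -(T 1 - T (-1) : A) ^ 2 * (u * conj u) = -(T 1 - T (-1)) ^ 2 * 1 := by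
      rw [hstep, hx, mul_one]
    exact mul_left_cancel₀ (neg_ne_zero.mpr (pow_ne_zero 2 dne)) hkey
  · rintro ⟨u, hu, rfl⟩
    rw [map_mul, conj_d]
    calc (T 1 - T (-1)) * u * (-(T 1 - T (-1)) * conj u)
        = -(T 1 - T (-1)) ^ 2 * (u * conj u) := by ring
      _ = -(T 1 - T (-1)) ^ 2 := by rw [hu, mul_one]
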